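/- For all regular trees 𝔸, 𝔹 ∈ 𝔗: (for every k ∈ ℕ, ⌊𝔸⌋k ≈T ⌊𝔹⌋k) if and only if 𝔸 ≈T 𝔹. -/

import Mathlib

set_option maxHeartbeats 1000000

namespace CAPPaper

/- ## μ-types: datatype variables `var true v`, type variables `var false v`,
   type constants `const c` (with `const 0` also playing the role of junk/∘),
   type application `app`, function types `arrow`, unions `union`,
   recursive types `mu`. -/

inductive MuTy : Type
  | var : Bool → ℕ → MuTy
  | const : ℕ → MuTy
  | app : MuTy → MuTy → MuTy
  | arrow : MuTy → MuTy → MuTy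
  | union : MuTy → MuTy → MuTy
  | mu : Bool → ℕ → MuTy → MuTy

namespace MuTy

/-- Naive substitution of `T` for the variable `(b, v)`; binders shadow. -/
def subst (b : Bool) (v : ℕ) (T : MuTy) : MuTy → MuTy
  | var b' v' => if b' = b ∧ v' = v then T else var b' v'
  | const c => const c
  | app A B => app (subst b v T A) (subst b v T B)
  | arrow A B => arrow (subst b v T A) (subst b v T B)
  | union A B => union (subst b v T A) (subst b v T B)
  | mu b' v' A => if b' = b ∧ v' = v then mu b' v' A else mu b' v' (subst b v T A)

/-- The variable `(b, v)` occurs free. -/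
def FreeIn (b : Bool) (v : ℕ) : MuTy → Prop
  | var b' v' => b' = b ∧ v' = v
  | const _ => False
  | app A B => FreeIn b v A ∨ FreeIn b v B
  | arrow A B => FreeIn b v A ∨ FreeIn b v B
  | union A B => FreeIn b v A ∨ FreeIn b v B
  | mu b' v' A => ¬(b' = b ∧ v' = v) ∧ FreeIn b v A

/-- The variable `(b, v)` occurs only under `⊃` or `@`. -/
def Guarded (b : Bool) (v : ℕ) : MuTy → Prop
  | var b' v' => ¬(b' = b ∧ v' = v)
  | const _ => True
  | app _ _ => True
  | arrow _ _ => True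
  | union A B => Guarded b v A ∧ Guarded b v B
  | mu b' v' A => (b' = b ∧ v' = v) ∨ Guarded b v A

/-- Contractive μ-types. -/
def Contr : MuTy → Prop
  | var _ _ => True
  | const _ => True
  | app A B => Contr A ∧ Contr B
  | arrow A B => Contr A ∧ Contr B
  | union A B => Contr A ∧ Contr B
  | mu b v A => Guarded b v A ∧ Contr A

/-- μ-datatypes. -/
inductive IsData : MuTy → Prop
  | var (v : ℕ) : IsData (var true v)
  | const (c : ℕ) : IsData (const c)
  | app {D : MuTy} (A : MuTy) : IsData D → IsData (app D A)
  | union {D D' : MuTy} : IsData D → IsData D' → IsData (union D D')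
  | mu {v : ℕ} {D : MuTy} : IsData D → IsData (mu true v D)

def IsMu : MuTy → Prop
  | mu _ _ _ => True
  | _ => False

def IsUnion : MuTy → Prop
  | union _ _ => True
  | _ => False

def IsAtom : MuTy → Prop
  | var _ _ => True
  | const _ => True
  | _ => False

/-- The non-union components of a maximal union, in left-to-right order. -/
def comps : MuTy → List MuTy
  | union A B => comps A ++ comps B
  | A => [A]

/-- Replace the `i`-th (left-to-right) non-union component of a maximal union. -/
def replaceComp : MuTy → ℕ → MuTy → MuTy
  | union A B, i, N =>
      if i < (comps A).length then union (replaceComp A i N) B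
      else union A (replaceComp B (i - (comps A).length) N)
  | A, i, N => if i = 0 then N else A

end MuTy

/- ## Type equivalence `≈μ` -/

inductive EqMu : MuTy → MuTy → Prop
  | refl (A : MuTy) : EqMu A A
  | symm {A B : MuTy} : EqMu A B → EqMu B A
  | trans {A B C : MuTy} : EqMu A B → EqMu B C → EqMu A C
  | app {D D' A A' : MuTy} : EqMu D D' → EqMu A A' → EqMu (.app D A) (.app D' A')
  | arrow {A A' B B' : MuTy} : EqMu A A' → EqMu B B' → EqMu (.arrow A B) (.arrow A' B')
  | union {A A' B B' : MuTy} : EqMu A A' → EqMu B B' → EqMu (.union A B) (.union A' B')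
  | mu {A B : MuTy} (b : Bool) (v : ℕ) : EqMu A B → EqMu (.mu b v A) (.mu b v B)
  | idem (A : MuTy) : EqMu (.union A A) A
  | comm (A B : MuTy) : EqMu (.union A B) (.union B A)
  | assoc (A B C : MuTy) : EqMu (.union A (.union B C)) (.union (.union A B) C)
  | fold (b : Bool) (v : ℕ) (A : MuTy) : EqMu (.mu b v A) (MuTy.subst b v (.mu b v A) A)
  | contract {A B : MuTy} {b : Bool} {v : ℕ} :
      EqMu A (MuTy.subst b v A B) → MuTy.Contr (.mu b v B) → EqMu A (.mu b v B)

/- ## Subtyping `Σ ⊢ A ≤μ B` -/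

inductive SubMu : Set ((Bool × ℕ) × (Bool × ℕ)) → MuTy → MuTy → Prop
  | refl (SS) (A : MuTy) : SubMu SS A A
  | hyp {SS} {V W : Bool × ℕ} : (V, W) ∈ SS → SubMu SS (.var V.1 V.2) (.var W.1 W.2)
  | eq {A B : MuTy} (SS) : EqMu A B → SubMu SS A B
  | trans {SS} {A B C : MuTy} : SubMu SS A B → SubMu SS B C → SubMu SS A C
  | app {SS} {D D' A A' : MuTy} : SubMu SS D D' → SubMu SS A A' →
      SubMu SS (.app D A) (.app D' A')
  | arrow {SS} {A A' B B' : MuTy} : SubMu SS A A' → SubMu SS B B' →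
      SubMu SS (.arrow A' B) (.arrow A B')
  | unionL {SS} {A B C : MuTy} : SubMu SS A C → SubMu SS B C → SubMu SS (.union A B) C
  | unionR1 {SS} {A B C : MuTy} : SubMu SS A B → SubMu SS A (.union B C)
  | unionR2 {SS} {A B C : MuTy} : SubMu SS A C → SubMu SS A (.union B C)
  | mu {SS} {V W : Bool × ℕ} {A B : MuTy} :
      SubMu (insert (V, W) SS) A B →
      ¬ MuTy.FreeIn W.1 W.2 A → ¬ MuTy.FreeIn V.1 V.2 B →
      SubMu SS (.mu V.1 V.2 A) (.mu W.1 W.2 B)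

/-- `A ≤μ B` (empty set of hypotheses). -/
def Sub (A B : MuTy) : Prop := SubMu ∅ A B

/- ## Coinductive equivalence `≈⃗μ` and subtyping `≤⃗μ` on μ-types,
   given via their generating functions and greatest fixed points. -/

/-- One-step unfolding of the rules for `≈⃗μ`. -/
def EqVecStep (R : MuTy → MuTy → Prop) (A B : MuTy) : Prop :=
  (MuTy.IsAtom A ∧ A = B)
  ∨ (∃ D A' D' B', A = .app D A' ∧ B = .app D' B' ∧ R D D' ∧ R A' B')
  ∨ (∃ A1 A2 B1 B2, A = .arrow A1 A2 ∧ B = .arrow B1 B2 ∧ R A1 B1 ∧ R A2 B2)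
  ∨ (∃ i b v C, (∀ X ∈ A.comps.take i, ¬ X.IsMu) ∧ A.comps[i]? = some (.mu b v C) ∧
      R (A.replaceComp i (MuTy.subst b v (.mu b v C) C)) B)
  ∨ ((∀ X ∈ A.comps, ¬ X.IsMu) ∧
      ∃ j b w C, (∀ Y ∈ B.comps.take j, ¬ Y.IsMu) ∧ B.comps[j]? = some (.mu b w C) ∧
      R A (B.replaceComp j (MuTy.subst b w (.mu b w C) C)))
  ∨ ((A.IsUnion ∨ B.IsUnion) ∧ (∀ X ∈ A.comps, ¬ X.IsMu) ∧ (∀ Y ∈ B.comps, ¬ Y.IsMu) ∧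
      (∀ X ∈ A.comps, ∃ Y ∈ B.comps, R X Y) ∧ (∀ Y ∈ B.comps, ∃ X ∈ A.comps, R X Y))

/-- The generating function `Φ≈⃗μ`. -/
def PhiEqVec (X : Set (MuTy × MuTy)) : Set (MuTy × MuTy) :=
  {p | EqVecStep (fun a b => (a, b) ∈ X) p.1 p.2}

/-- `A ≈⃗μ B`: the greatest fixed point of `Φ≈⃗μ`. -/
def EqVec (A B : MuTy) : Prop :=
  ∃ R : MuTy → MuTy → Prop, (∀ x y, R x y → EqVecStep R x y) ∧ R A B

/-- One-step unfolding of the rules for `≤⃗μ`. -/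
def SubVecStep (R : MuTy → MuTy → Prop) (A B : MuTy) : Prop :=
  (MuTy.IsAtom A ∧ A = B)
  ∨ (∃ D A' D' B', A = .app D A' ∧ B = .app D' B' ∧ R D D' ∧ R A' B')
  ∨ (∃ A1 A2 B1 B2, A = .arrow A1 A2 ∧ B = .arrow B1 B2 ∧ R B1 A1 ∧ R A2 B2)
  ∨ (∃ b v A', A = .mu b v A' ∧ R (MuTy.subst b v A A') B)
  ∨ (¬ A.IsMu ∧ ∃ b w B', B = .mu b w B' ∧ R A (MuTy.subst b w B B'))
  ∨ (A.IsUnion ∧ ¬ B.IsMu ∧ ∀ A' ∈ A.comps, R A' B)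
  ∨ (¬ A.IsUnion ∧ ¬ A.IsMu ∧ B.IsUnion ∧ ∃ B' ∈ B.comps, R A B')

/-- The generating function `Φ≤⃗μ`. -/
def PhiSubVec (X : Set (MuTy × MuTy)) : Set (MuTy × MuTy) :=
  {p | SubVecStep (fun a b => (a, b) ∈ X) p.1 p.2}

/-- `A ≤⃗μ B`: the greatest fixed point of `Φ≤⃗μ`. -/
def SubVec (A B : MuTy) : Prop :=
  ∃ R : MuTy → MuTy → Prop, (∀ x y, R x y → SubVecStep R x y) ∧ R A B

/- ## Possibly infinite trees 𝔗 -/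

inductive Leaf : Type
  | var : Bool → ℕ → Leaf
  | const : ℕ → Leaf
  | circ : Leaf
deriving DecidableEq

inductive TSym : Type
  | leaf : Leaf → TSym
  | app : TSym
  | arrow : TSym
  | union : TSym
deriving DecidableEq

/-- Raw (partial) trees: a labelling of binary positions. -/
abbrev PTree := List Bool → Option TSym

def childT (t : PTree) (i : Bool) : PTree := fun π => t (i :: π)

def subtreeAt (t : PTree) (ρ : List Bool) : PTree := fun π => t (ρ ++ π)

def TSym.IsBinary : TSym → Prop
  | .leaf _ => False
  | _ => True

/-- The set 𝔗 of regular possibly infinite trees with no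
    infinite branch consisting solely of ⊕-nodes. -/
structure ITree where
  label : PTree
  root_isSome : (label []).isSome
  child_iff : ∀ (π : List Bool) (i : Bool),
      (label (π ++ [i])).isSome ↔ ∃ s, label π = some s ∧ s.IsBinary
  regular : {u : PTree | ∃ π : List Bool, (label π).isSome ∧ u = subtreeAt label π}.Finite
  noUnionBranch : ¬ ∃ (π : List Bool) (g : ℕ → Bool),
      ∀ n : ℕ, label (π ++ (List.range n).map g) = some TSym.union

/- ## Truncation ⌊·⌋k -/

def truncAux : List Bool → ℕ → PTree → Option TSym
  | [], 0, _ => some (.leaf .circ)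
  | [], _ + 1, t => t []
  | _ :: _, 0, _ => none
  | i :: π, k + 1, t =>
      match t [] with
      | some .union => truncAux π (k + 1) (childT t i)
      | some .app => truncAux π k (childT t i)
      | some .arrow => truncAux π k (childT t i)
      | _ => none

/-- The truncation of a tree at depth `k`. -/
def trunc (k : ℕ) (t : PTree) : PTree := fun π => truncAux π k t

/- ## The infinite unfolding ⟦·⟧ of a μ-type -/

def muDepth : MuTy → ℕ
  | .mu _ _ A => muDepth A + 1
  | _ => 0

def headUnfold : ℕ → MuTy → MuTy
  | 0, A => A
  | n + 1, .mu b v A => headUnfold n (MuTy.subst b v (.mu b v A) A)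
  | _ + 1, A => A

/-- Unfold the head μ-binders away (total; fully unfolds contractive types). -/
def hnf (A : MuTy) : MuTy := headUnfold (muDepth A) A

def unfoldLabel : List Bool → MuTy → Option TSym
  | [], A =>
      match hnf A with
      | .var b v => some (.leaf (.var b v))
      | .const c => some (.leaf (.const c))
      | .app _ _ => some .app
      | .arrow _ _ => some .arrow
      | .union _ _ => some .union
      | .mu _ _ _ => none
  | i :: π, A =>
      match hnf A with
      | .app B C => unfoldLabel π (if i then C else B)
      | .arrow B C => unfoldLabel π (if i then C else B)
      | .union B C => unfoldLabel π (if i then C else B)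
      | _ => none

/-- `⟦A⟧`, the complete unfolding of a μ-type into a tree. -/
def treeOf (A : MuTy) : PTree := fun π => unfoldLabel π A

/- ## Maximal-union components of a tree -/

/-- `ρ` reaches, through ⊕-nodes only, a non-⊕ node of `t`:
    the components of the maximal union decomposition of `t`. -/
def IsCompPath (t : PTree) (ρ : List Bool) : Prop :=
  (∀ ρ' : List Bool, ρ' <+: ρ → ρ' ≠ ρ → t ρ' = some TSym.union) ∧
  (t ρ).isSome ∧ t ρ ≠ some TSym.union

def compPaths (t : PTree) : Set (List Bool) := {ρ | IsCompPath t ρ}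

/- ## Coinductive equality ≈T and subtyping ≤T on trees -/

def EqTStep (R : PTree → PTree → Prop) (A B : PTree) : Prop :=
  (∃ a, A [] = some (.leaf a) ∧ B [] = some (.leaf a))
  ∨ (A [] = some .app ∧ B [] = some .app ∧
      R (childT A false) (childT B false) ∧ R (childT A true) (childT B true))
  ∨ (A [] = some .arrow ∧ B [] = some .arrow ∧
      R (childT A false) (childT B false) ∧ R (childT A true) (childT B true))
  ∨ ((A [] = some .union ∨ B [] = some .union) ∧
      (∀ ρ ∈ compPaths A, ∃ ρ' ∈ compPaths B, R (subtreeAt A ρ) (subtreeAt B ρ')) ∧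
      (∀ ρ' ∈ compPaths B, ∃ ρ ∈ compPaths A, R (subtreeAt A ρ) (subtreeAt B ρ')))

/-- `≈T`, as the greatest fixed point of its generating function. -/
def EqT (A B : PTree) : Prop :=
  ∃ R : PTree → PTree → Prop, (∀ x y, R x y → EqTStep R x y) ∧ R A B

def SubTStep (R : PTree → PTree → Prop) (A B : PTree) : Prop :=
  (∃ a, A [] = some (.leaf a) ∧ B [] = some (.leaf a))
  ∨ (A [] = some .app ∧ B [] = some .app ∧
      R (childT A false) (childT B false) ∧ R (childT A true) (childT B true))
  ∨ (A [] = some .arrow ∧ B [] = some .arrow ∧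
      R (childT B false) (childT A false) ∧ R (childT A true) (childT B true))
  ∨ (A [] = some .union ∧ B [] ≠ some .union ∧
      ∀ ρ ∈ compPaths A, R (subtreeAt A ρ) B)
  ∨ (A [] ≠ some .union ∧ B [] = some .union ∧
      ∃ ρ' ∈ compPaths B, R A (subtreeAt B ρ'))
  ∨ (A [] = some .union ∧ B [] = some .union ∧
      ∀ ρ ∈ compPaths A, ∃ ρ' ∈ compPaths B, R (subtreeAt A ρ) (subtreeAt B ρ'))

/-- `≤T`, as the greatest fixed point of its generating function. -/
def SubT (A B : PTree) : Prop :=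
  ∃ R : PTree → PTree → Prop, (∀ x y, R x y → SubTStep R x y) ∧ R A B

/- ## Multi-hole μ⊕-contexts -/

inductive MuCtx : Type
  | hole : MuCtx
  | mu : Bool → ℕ → MuCtx → MuCtx
  | union : MuCtx → MuCtx → MuCtx

namespace MuCtx

def holes : MuCtx → ℕ
  | hole => 1
  | mu _ _ C => C.holes
  | union C D => C.holes + D.holes

def fill : MuCtx → List MuTy → MuTy
  | hole, As => As.headD (.const 0)
  | mu b v C, As => .mu b v (C.fill As)
  | union C D, As => .union (C.fill (As.take C.holes)) (D.fill (As.drop C.holes))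

/-- Positions of the holes, in left-to-right order. -/
def holePos : MuCtx → List (List Bool)
  | hole => [[]]
  | mu _ _ C => C.holePos.map (fun π => false :: π)
  | union C D => C.holePos.map (fun π => false :: π) ++ D.holePos.map (fun π => true :: π)

/-- Projection of the hole at position `π` of `𝖠[A⃗]`. -/
def proj : MuCtx → List MuTy → List Bool → Option MuTy
  | hole, As, [] => As.head?
  | mu b v C, As, false :: π =>
      (proj C As π).map (MuTy.subst b v (.mu b v (C.fill As)))
  | union C _D, As, false :: π => proj C (As.take C.holes) π
  | union C D, As, true :: π => proj D (As.drop C.holes) π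
  | _, _, _ => none

/-- Erase all μ-binders. -/
def erase : MuCtx → MuCtx
  | hole => hole
  | mu _ _ C => C.erase
  | union C D => .union C.erase D.erase

/-- ⊕-contexts (no μ-binders). -/
def IsUnionCtx : MuCtx → Prop
  | hole => True
  | mu _ _ _ => False
  | union C D => C.IsUnionCtx ∧ D.IsUnionCtx

/-- Filling a (μ-erased) context with trees. -/
def fillT : MuCtx → List PTree → List Bool → Option TSym
  | hole, ts, π => (ts.headD (fun _ => none)) π
  | mu _ _ C, ts, π => fillT C ts π
  | union _ _, _, [] => some TSym.union
  | union C _D, ts, false :: π => fillT C (ts.take C.holes) π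
  | union C D, ts, true :: π => fillT D (ts.drop C.holes) π

end MuCtx

/- ## n-ary-union trees 𝔗ⁿ -/

inductive NSym : Type
  | leaf : Leaf → NSym
  | app : NSym
  | arrow : NSym
  | union : ℕ → NSym

abbrev PTreeN := List ℕ → Option NSym

def childN (t : PTreeN) (j : ℕ) : PTreeN := fun π => t (j :: π)

def IsUnionRootN (t : PTreeN) : Prop := ∃ n, t [] = some (.union n)

/-- A key realising the left-to-right (lexicographic) order of prefix-free
    sets of positions. -/
def pathKey : List Bool → ℚ
  | [] => 0
  | b :: ρ => (if b then 1 else 0) + pathKey ρ / 2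

/-- `ρ` is the `j`-th (in left-to-right order, starting from 0) component path of `t`. -/
def IsNthComp (t : PTree) (j : ℕ) (ρ : List Bool) : Prop :=
  IsCompPath t ρ ∧ {ρ' | IsCompPath t ρ' ∧ pathKey ρ' < pathKey ρ}.ncard = j

-- The translation ⟨·⟩ : 𝔗 → 𝔗ⁿ flattening maximal unions into n-ary unions.
open Classical in
noncomputable def transLabel : List ℕ → PTree → Option NSym
  | [], t =>
      match t [] with
      | some (.leaf a) => some (.leaf a)
      | some .app => some NSym.app
      | some .arrow => some NSym.arrow
      | some .union => some (.union (compPaths t).ncard)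
      | none => none
  | j :: π, t =>
      match t [] with
      | some .union =>
          if h : ∃ ρ, IsNthComp t j ρ then transLabel π (subtreeAt t h.choose)
          else none
      | some .app => if j < 2 then transLabel π (childT t (j == 1)) else none
      | some .arrow => if j < 2 then transLabel π (childT t (j == 1)) else none
      | _ => none

noncomputable def transN (t : PTree) : PTreeN := fun π => transLabel π t

/- ## Subtyping and equivalence up-to a relation ℛ on 𝔗ⁿ -/

def NSubStep (RR S : PTreeN → PTreeN → Prop) (A B : PTreeN) : Prop :=
  let P := fun x y => S x y ∨ RR x y
  (∃ a, A [] = some (.leaf a) ∧ B [] = some (.leaf a))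
  ∨ (A [] = some .app ∧ B [] = some .app ∧
      P (childN A 0) (childN B 0) ∧ P (childN A 1) (childN B 1))
  ∨ (A [] = some .arrow ∧ B [] = some .arrow ∧
      P (childN B 0) (childN A 0) ∧ P (childN A 1) (childN B 1))
  ∨ (∃ n m, A [] = some (.union n) ∧ B [] = some (.union m) ∧
      (∀ i < n, ¬ IsUnionRootN (childN A i)) ∧ (∀ j < m, ¬ IsUnionRootN (childN B j)) ∧
      ∃ f : ℕ → ℕ, ∀ i < n, f i < m ∧ P (childN A i) (childN B (f i)))
  ∨ (∃ n, A [] = some (.union n) ∧ ¬ IsUnionRootN B ∧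
      (∀ i < n, ¬ IsUnionRootN (childN A i)) ∧ ∀ i < n, P (childN A i) B)
  ∨ (∃ m, B [] = some (.union m) ∧ ¬ IsUnionRootN A ∧
      (∀ j < m, ¬ IsUnionRootN (childN B j)) ∧ ∃ k < m, P A (childN B k))

/-- The subtyping relation up-to `RR` on 𝔗ⁿ. -/
def SubN (RR : PTreeN → PTreeN → Prop) (A B : PTreeN) : Prop :=
  ∃ S : PTreeN → PTreeN → Prop, (∀ x y, S x y → NSubStep RR S x y) ∧ S A B

def NEqStep (RR S : PTreeN → PTreeN → Prop) (A B : PTreeN) : Prop :=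
  let P := fun x y => S x y ∨ RR x y
  (∃ a, A [] = some (.leaf a) ∧ B [] = some (.leaf a))
  ∨ (A [] = some .app ∧ B [] = some .app ∧
      P (childN A 0) (childN B 0) ∧ P (childN A 1) (childN B 1))
  ∨ (A [] = some .arrow ∧ B [] = some .arrow ∧
      P (childN A 0) (childN B 0) ∧ P (childN A 1) (childN B 1))
  ∨ (∃ n m, A [] = some (.union n) ∧ B [] = some (.union m) ∧
      (∀ i < n, ¬ IsUnionRootN (childN A i)) ∧ (∀ j < m, ¬ IsUnionRootN (childN B j)) ∧
      (∃ f : ℕ → ℕ, ∀ i < n, f i < m ∧ P (childN A i) (childN B (f i))) ∧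
      (∃ g : ℕ → ℕ, ∀ j < m, g j < n ∧ P (childN A (g j)) (childN B j)))
  ∨ (∃ n, A [] = some (.union n) ∧ ¬ IsUnionRootN B ∧
      (∀ i < n, ¬ IsUnionRootN (childN A i)) ∧ ∀ i < n, P (childN A i) B)
  ∨ (∃ m, B [] = some (.union m) ∧ ¬ IsUnionRootN A ∧
      (∀ j < m, ¬ IsUnionRootN (childN B j)) ∧ ∀ j < m, P A (childN B j))

/-- The equivalence relation up-to `RR` on 𝔗ⁿ. -/
def EqN (RR : PTreeN → PTreeN → Prop) (A B : PTreeN) : Prop :=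
  ∃ S : PTreeN → PTreeN → Prop, (∀ x y, S x y → NEqStep RR S x y) ∧ S A B

/- ## CAP: patterns, terms, matching, reduction, typing -/

inductive Pat : Type
  | matchv : ℕ → Pat
  | const : ℕ → Pat
  | comp : Pat → Pat → Pat

/-- Matchables of a pattern. -/
def Pat.mv : Pat → Set ℕ
  | .matchv x => {x}
  | .const _ => ∅
  | .comp p q => p.mv ∪ q.mv

/-- Linear patterns. -/
def Pat.Linear : Pat → Prop
  | .matchv _ => True
  | .const _ => True
  | .comp p q => p.Linear ∧ q.Linear ∧ ∀ x ∈ p.mv, x ∉ q.mv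

/-- Typing contexts (for terms and for matchables of patterns). -/
abbrev TyCtx := ℕ → Option MuTy

inductive Tm : Type
  | var : ℕ → Tm
  | const : ℕ → Tm
  | app : Tm → Tm → Tm
  | abs : List (Pat × TyCtx × Tm) → Tm

/-- Data structures. -/
def isDataB : Tm → Bool
  | .const _ => true
  | .app d _ => isDataB d
  | _ => false

/-- Matchable forms: data structures and abstractions. -/
def isMatchableB : Tm → Bool
  | .abs _ => true
  | t => isDataB t

/-- Outcome of matching. -/
inductive MOut : Type
  | subst : (ℕ → Option Tm) → MOut
  | fail : MOut
  | wait : MOut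

/-- Disjoint union of matching outcomes. -/
def MOut.join : MOut → MOut → MOut
  | .fail, _ => .fail
  | _, .fail => .fail
  | .wait, _ => .wait
  | _, .wait => .wait
  | .subst σ₁, .subst σ₂ => .subst (fun x => (σ₁ x).orElse (fun _ => σ₂ x))

/-- The matching operation `p ⋗ u`. -/
def pmatch : Pat → Tm → MOut
  | .matchv x, u => .subst (fun y => if y = x then some u else none)
  | .const c, .const c' => if c = c' then .subst (fun _ => none) else .fail
  | .comp p q, .app u v =>
      if isMatchableB (.app u v) then (pmatch p u).join (pmatch q v) else .wait
  | _, u => if isMatchableB u then .fail else .wait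

-- Applying a substitution to a term.
mutual
  def applySubst (σ : ℕ → Option Tm) : Tm → Tm
    | .var x => (σ x).getD (.var x)
    | .const c => .const c
    | .app t u => .app (applySubst σ t) (applySubst σ u)
    | .abs bs => .abs (applySubstBs σ bs)
  def applySubstBs (σ : ℕ → Option Tm) : List (Pat × TyCtx × Tm) → List (Pat × TyCtx × Tm)
    | [] => []
    | (p, θ, s) :: bs => (p, θ, applySubst σ s) :: applySubstBs σ bs
end

/-- Reduction, the context closure of the β-rule of CAP. -/
inductive Step : Tm → Tm → Prop
  | beta (bs : List (Pat × TyCtx × Tm)) (u : Tm) (j : ℕ) (hj : j < bs.length)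
      (σ : ℕ → Option Tm) :
      (∀ i (hi : i < bs.length), i < j → pmatch (bs.get ⟨i, hi⟩).1 u = .fail) →
      pmatch (bs.get ⟨j, hj⟩).1 u = .subst σ →
      Step (.app (.abs bs) u) (applySubst σ (bs.get ⟨j, hj⟩).2.2)
  | appL {t t' : Tm} (u : Tm) : Step t t' → Step (.app t u) (.app t' u)
  | appR (t : Tm) {u u' : Tm} : Step u u' → Step (.app t u) (.app t u')
  | abs (l r : List (Pat × TyCtx × Tm)) (p : Pat) (θ : TyCtx) {s s' : Tm} :
      Step s s' → Step (.abs (l ++ (p, θ, s) :: r)) (.abs (l ++ (p, θ, s') :: r))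

/-- All patterns occurring in a term are linear. -/
inductive TmWF : Tm → Prop
  | var (x : ℕ) : TmWF (.var x)
  | const (c : ℕ) : TmWF (.const c)
  | app {t u : Tm} : TmWF t → TmWF u → TmWF (.app t u)
  | abs {bs : List (Pat × TyCtx × Tm)} :
      (∀ b ∈ bs, b.1.Linear) → (∀ b ∈ bs, TmWF b.2.2) → TmWF (.abs bs)

-- Values.
mutual
  inductive Neut : Tm → Prop
    | var (x : ℕ) : Neut (.var x)
    | const (c : ℕ) : Neut (.const c)
    | app {t u : Tm} : Neut t → IsValue u → Neut (.app t u)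
  inductive IsValue : Tm → Prop
    | neut {t : Tm} : Neut t → IsValue t
    | abs (bs : List (Pat × TyCtx × Tm)) : IsValue (.abs bs)
end

/- ## Pattern typing and compatibility -/

inductive PatTy : TyCtx → Pat → MuTy → Prop
  | matchv {θ : TyCtx} {x : ℕ} {A : MuTy} : θ x = some A → PatTy θ (.matchv x) A
  | const (θ : TyCtx) (c : ℕ) : PatTy θ (.const c) (.const c)
  | comp {θ : TyCtx} {p q : Pat} {D A : MuTy} :
      PatTy θ p D → MuTy.IsData D → PatTy θ q A → PatTy θ (.comp p q) (.app D A)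

/-- Symbols admitted at a position of a μ-type. -/
inductive PSym : Type
  | var : Bool → ℕ → PSym
  | const : ℕ → PSym
  | arrow : PSym
  | app : PSym

/-- `Admits A π s`: the symbol `s` belongs to `A@π`. -/
inductive Admits : MuTy → List Bool → PSym → Prop
  | var (b : Bool) (v : ℕ) : Admits (.var b v) [] (.var b v)
  | const (c : ℕ) : Admits (.const c) [] (.const c)
  | arrowE (A B : MuTy) : Admits (.arrow A B) [] .arrow
  | appE (A B : MuTy) : Admits (.app A B) [] .app
  | arrow1 {A : MuTy} {π : List Bool} {s : PSym} (B : MuTy) :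
      Admits A π s → Admits (.arrow A B) (false :: π) s
  | arrow2 (A : MuTy) {B : MuTy} {π : List Bool} {s : PSym} :
      Admits B π s → Admits (.arrow A B) (true :: π) s
  | app1 {A : MuTy} {π : List Bool} {s : PSym} (B : MuTy) :
      Admits A π s → Admits (.app A B) (false :: π) s
  | app2 (A : MuTy) {B : MuTy} {π : List Bool} {s : PSym} :
      Admits B π s → Admits (.app A B) (true :: π) s
  | unionL {A : MuTy} {π : List Bool} {s : PSym} (B : MuTy) :
      Admits A π s → Admits (.union A B) π s
  | unionR (A : MuTy) {B : MuTy} {π : List Bool} {s : PSym} :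
      Admits B π s → Admits (.union A B) π s
  | mu {b : Bool} {v : ℕ} {A : MuTy} {π : List Bool} {s : PSym} :
      Admits (MuTy.subst b v (.mu b v A) A) π s → Admits (.mu b v A) π s

/-- Subpattern at a position. -/
def Pat.at? : Pat → List Bool → Option Pat
  | p, [] => some p
  | .comp p q, i :: π => if i then q.at? π else p.at? π
  | _, _ :: _ => none

/-- Applying a (pattern) substitution to a pattern. -/
def psubst (σ : ℕ → Option Pat) : Pat → Pat
  | .matchv x => (σ x).getD (.matchv x)
  | .const c => .const c
  | .comp p q => .comp (psubst σ p) (psubst σ q)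

/-- `p` subsumes `q`. -/
def Subsumes (p q : Pat) : Prop := ∃ σ, psubst σ p = q

def CommonPos (p q : Pat) (π : List Bool) : Prop :=
  (p.at? π).isSome ∧ (q.at? π).isSome

/-- Mismatching positions between two patterns. -/
def CPos (p q : Pat) (π : List Bool) : Prop :=
  CommonPos p q π ∧ (∀ π' : List Bool, π' ≠ [] → ¬ CommonPos p q (π ++ π')) ∧
  ∃ p' q', p.at? π = some p' ∧ q.at? π = some q' ∧ ¬ Subsumes p' q'

/-- Compatibility of `⟨θ ⊳ p : A⟩` with `⟨θ' ⊳ q : B⟩`. -/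
def Compat (p : Pat) (A : MuTy) (q : Pat) (B : MuTy) : Prop :=
  (∀ π, CPos p q π → ∃ s, Admits A π s ∧ Admits B π s) → Sub B A

def ctxDom (θ : TyCtx) : Set ℕ := {x | (θ x).isSome}

def ctxExt (Γ θ : TyCtx) : TyCtx := fun x => (θ x).orElse (fun _ => Γ x)

/-- `⊕` of a nonempty list of types. -/
def bigUnion : List MuTy → MuTy
  | [] => .const 0
  | [A] => A
  | A :: As => .union A (bigUnion As)

/- ## Term typing -/

inductive Ty : TyCtx → Tm → MuTy → Prop
  | var {Γ : TyCtx} {x : ℕ} {A : MuTy} : Γ x = some A → Ty Γ (.var x) A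
  | const (Γ : TyCtx) (c : ℕ) : Ty Γ (.const c) (.const c)
  | comp {Γ : TyCtx} {r u : Tm} {D A : MuTy} :
      Ty Γ r D → MuTy.IsData D → Ty Γ u A → Ty Γ (.app r u) (.app D A)
  | abs {Γ : TyCtx} (l : List ((Pat × TyCtx × Tm) × MuTy)) {B : MuTy} :
      l ≠ [] →
      (∀ i j (hi : i < l.length) (hj : j < l.length), i < j →
        Compat (l.get ⟨i, hi⟩).1.1 (l.get ⟨i, hi⟩).2
               (l.get ⟨j, hj⟩).1.1 (l.get ⟨j, hj⟩).2) →
      (∀ b ∈ l, PatTy b.1.2.1 b.1.1 b.2) →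
      (∀ b ∈ l, ctxDom b.1.2.1 = Pat.mv b.1.1) →
      (∀ b ∈ l, Ty (ctxExt Γ b.1.2.1) b.1.2.2 B) →
      Ty Γ (.abs (l.map Prod.fst)) (.arrow (bigUnion (l.map Prod.snd)) B)
  | app {Γ : TyCtx} {r u : Tm} {B : MuTy} (As : List MuTy) (k : ℕ) (hk : k < As.length) :
      Ty Γ r (.arrow (bigUnion As) B) →
      Ty Γ u (As.get ⟨k, hk⟩) →
      Ty Γ (.app r u) B
  | sub {Γ : TyCtx} {s : Tm} {A A' : MuTy} : Ty Γ s A → Sub A A' → Ty Γ s A'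

/- ## Syntax-directed term typing -/

inductive TySD : TyCtx → Tm → MuTy → Prop
  | var {Γ : TyCtx} {x : ℕ} {A : MuTy} : Γ x = some A → TySD Γ (.var x) A
  | const (Γ : TyCtx) (c : ℕ) : TySD Γ (.const c) (.const c)
  | comp {Γ : TyCtx} {r u : Tm} {D A : MuTy} :
      TySD Γ r D → MuTy.IsData D → TySD Γ u A → TySD Γ (.app r u) (.app D A)
  | abs {Γ : TyCtx} (l : List ((Pat × TyCtx × Tm) × MuTy × MuTy)) :
      l ≠ [] →
      (∀ i j (hi : i < l.length) (hj : j < l.length), i < j →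
        Compat (l.get ⟨i, hi⟩).1.1 (l.get ⟨i, hi⟩).2.1
               (l.get ⟨j, hj⟩).1.1 (l.get ⟨j, hj⟩).2.1) →
      (∀ b ∈ l, PatTy b.1.2.1 b.1.1 b.2.1) →
      (∀ b ∈ l, ctxDom b.1.2.1 = Pat.mv b.1.1) →
      (∀ b ∈ l, TySD (ctxExt Γ b.1.2.1) b.1.2.2 b.2.2) →
      TySD Γ (.abs (l.map Prod.fst))
        (.arrow (bigUnion (l.map (fun b => b.2.1))) (bigUnion (l.map (fun b => b.2.2))))
  | app {Γ : TyCtx} {r u : Tm} {A C : MuTy} (ABs : List (MuTy × MuTy)) :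
      ABs ≠ [] →
      TySD Γ r A →
      EqMu A (bigUnion (ABs.map (fun q => .arrow q.1 q.2))) →
      (∀ q ∈ ABs, ¬ (q.1).IsUnion) →
      TySD Γ u C →
      (∀ q ∈ ABs, Sub C q.1) →
      TySD Γ (.app r u) (bigUnion (ABs.map Prod.snd))

/- STATEMENT 5 -/

section TruncEqT

/-! ### Basic facts about truncation -/

lemma trunc_succ_nil (k : ℕ) (t : PTree) : trunc (k+1) t [] = t [] := rfl

lemma childT_trunc_app {t : PTree} (h : t [] = some .app) (k : ℕ) (i : Bool) :
    childT (trunc (k+1) t) i = trunc k (childT t i) := by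
  funext π
  show truncAux (i :: π) (k+1) t = truncAux π k (childT t i)
  simp [truncAux, h]

lemma childT_trunc_arrow {t : PTree} (h : t [] = some .arrow) (k : ℕ) (i : Bool) :
    childT (trunc (k+1) t) i = trunc k (childT t i) := by
  funext π
  show truncAux (i :: π) (k+1) t = truncAux π k (childT t i)
  simp [truncAux, h]

lemma childT_trunc_union {t : PTree} (h : t [] = some .union) (k : ℕ) (i : Bool) :
    childT (trunc (k+1) t) i = trunc (k+1) (childT t i) := by
  funext π
  show truncAux (i :: π) (k+1) t = truncAux π (k+1) (childT t i)
  simp [truncAux, h]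

lemma subtreeAt_nil (t : PTree) : subtreeAt t [] = t := rfl

lemma childT_eq_subtreeAt (t : PTree) (i : Bool) : childT t i = subtreeAt t [i] := rfl

lemma childT_subtreeAt (t : PTree) (π : List Bool) (i : Bool) :
    childT (subtreeAt t π) i = subtreeAt t (π ++ [i]) := by
  funext ρ
  show t (π ++ i :: ρ) = t ((π ++ [i]) ++ ρ)
  rw [List.append_assoc]
  rfl

lemma subtreeAt_subtreeAt (t : PTree) (π ρ : List Bool) :
    subtreeAt (subtreeAt t π) ρ = subtreeAt t (π ++ ρ) := by
  funext σ
  show t (π ++ (ρ ++ σ)) = t ((π ++ ρ) ++ σ)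
  rw [List.append_assoc]

lemma subtreeAt_childT (t : PTree) (i : Bool) (ρ : List Bool) :
    subtreeAt (childT t i) ρ = subtreeAt t (i :: ρ) := rfl

/-- Below an all-union prefix, truncation at positive depth commutes with subtrees. -/
lemma truncAux_append {ρ : List Bool} {t : PTree}
    (h : ∀ ρ', ρ' <+: ρ → ρ' ≠ ρ → t ρ' = some .union) :
    ∀ π k, truncAux (ρ ++ π) (k+1) t = truncAux π (k+1) (subtreeAt t ρ) := by
  induction ρ generalizing t with
  | nil => intro π k; rfl
  | cons i ρ ih =>
    intro π k
    have h0 : t [] = some .union := h [] ⟨i :: ρ, rfl⟩ (by simp)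
    have step : truncAux ((i :: ρ) ++ π) (k+1) t = truncAux (ρ ++ π) (k+1) (childT t i) := by
      show truncAux (i :: (ρ ++ π)) (k+1) t = _
      simp [truncAux, h0]
    rw [step, ih (t := childT t i) ?_ π k]
    · rfl
    · intro ρ' hp hne
      exact h (i :: ρ') (List.cons_prefix_cons.mpr ⟨rfl, hp⟩) (by simpa using hne)

lemma trunc_label_eq {t : PTree} {ρ : List Bool}
    (hpre : ∀ ρ', ρ' <+: ρ → ρ' ≠ ρ → t ρ' = some .union) (k : ℕ) :
    trunc (k+1) t ρ = t ρ := by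
  have h := truncAux_append hpre [] k
  simpa [truncAux, subtreeAt, trunc] using h

lemma subtreeAt_trunc {t : PTree} {ρ : List Bool}
    (hpre : ∀ ρ', ρ' <+: ρ → ρ' ≠ ρ → t ρ' = some .union) (k : ℕ) :
    subtreeAt (trunc (k+1) t) ρ = trunc (k+1) (subtreeAt t ρ) := by
  funext π
  exact truncAux_append hpre π k

lemma prefix_union_of_trunc {ρ : List Bool} {k : ℕ} {t : PTree}
    (h : ∀ ρ', ρ' <+: ρ → ρ' ≠ ρ → trunc (k+1) t ρ' = some .union) :
    ∀ ρ', ρ' <+: ρ → ρ' ≠ ρ → t ρ' = some .union := by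
  induction ρ generalizing t with
  | nil =>
    intro ρ' h1 h2
    exact absurd (List.prefix_nil.mp h1) h2
  | cons i ρ ih =>
    have h0 : t [] = some .union := h [] ⟨i :: ρ, rfl⟩ (by simp)
    intro ρ' hp hne
    cases ρ' with
    | nil => exact h0
    | cons j ρ'' =>
      obtain ⟨rfl, hp'⟩ := List.cons_prefix_cons.mp hp
      have hchild : ∀ σ, σ <+: ρ → σ ≠ ρ → trunc (k+1) (childT t j) σ = some .union := by
        intro σ hσ hσne
        have := h (j :: σ) (List.cons_prefix_cons.mpr ⟨rfl, hσ⟩) (by simpa using hσne)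
        show truncAux σ (k+1) (childT t j) = some .union
        rw [← this]
        show truncAux σ (k+1) (childT t j) = truncAux (j :: σ) (k+1) t
        simp [truncAux, h0]
      exact ih (t := childT t j) hchild ρ'' hp' (by simpa using hne)

lemma isCompPath_trunc_iff (k : ℕ) (t : PTree) (ρ : List Bool) :
    IsCompPath (trunc (k+1) t) ρ ↔ IsCompPath t ρ := by
  constructor
  · rintro ⟨hpre, hsome, hne⟩
    have hpre' := prefix_union_of_trunc hpre
    have heq := trunc_label_eq hpre' k
    exact ⟨hpre', by rwa [heq] at hsome, by rwa [heq] at hne⟩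
  · rintro ⟨hpre, hsome, hne⟩
    have hpre2 : ∀ ρ', ρ' <+: ρ → ρ' ≠ ρ → trunc (k+1) t ρ' = some .union := by
      intro ρ' hp hneρ
      have : ∀ ρ'', ρ'' <+: ρ' → ρ'' ≠ ρ' → t ρ'' = some .union := by
        intro ρ'' hp'' hne''
        refine hpre ρ'' (hp''.trans hp) ?_
        intro hcon
        subst hcon
        have h1 := hp''.length_le
        have h2 := hp.length_le
        exact hneρ (hp.eq_of_length (le_antisymm h2 h1))
      rw [trunc_label_eq this k]
      exact hpre ρ' hp hneρ
    exact ⟨hpre2, by rwa [trunc_label_eq hpre k], by rwa [trunc_label_eq hpre k]⟩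

lemma compPaths_trunc (k : ℕ) (t : PTree) :
    compPaths (trunc (k+1) t) = compPaths t :=
  Set.ext fun ρ => isCompPath_trunc_iff k t ρ

lemma truncAux_trunc : ∀ (π : List Bool) (k : ℕ) (t : PTree),
    truncAux π k (trunc (k+1) t) = truncAux π k t := by
  intro π
  induction π with
  | nil => intro k t; cases k <;> rfl
  | cons i π ih =>
    intro k t
    cases k with
    | zero => rfl
    | succ k =>
      have hroot : trunc (k+2) t [] = t [] := rfl
      show truncAux (i :: π) (k+1) (trunc (k+2) t) = truncAux (i :: π) (k+1) t
      cases h : t [] with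
      | none => simp [truncAux, hroot, h]
      | some s =>
        cases s with
        | leaf a => simp [truncAux, hroot, h]
        | app =>
          have hc : childT (trunc (k+2) t) i = trunc (k+1) (childT t i) :=
            childT_trunc_app h (k+1) i
          simp only [truncAux, hroot, h, hc]
          exact ih k (childT t i)
        | arrow =>
          have hc : childT (trunc (k+2) t) i = trunc (k+1) (childT t i) :=
            childT_trunc_arrow h (k+1) i
          simp only [truncAux, hroot, h, hc]
          exact ih k (childT t i)
        | union =>
          have hc : childT (trunc (k+2) t) i = trunc (k+2) (childT t i) :=
            childT_trunc_union h (k+1) i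
          simp only [truncAux, hroot, h, hc]
          exact ih (k+1) (childT t i)

lemma trunc_trunc (k : ℕ) (t : PTree) : trunc k (trunc (k+1) t) = trunc k t := by
  funext π
  exact truncAux_trunc π k t

/-! ### Basic facts about `EqT` -/

lemma eqTStep_mono {R S : PTree → PTree → Prop} (h : ∀ x y, R x y → S x y)
    {a b : PTree} (hab : EqTStep R a b) : EqTStep S a b := by
  rcases hab with h1 | ⟨h1, h2, h3, h4⟩ | ⟨h1, h2, h3, h4⟩ | ⟨h1, h2, h3⟩
  · exact Or.inl h1
  · exact Or.inr (Or.inl ⟨h1, h2, h _ _ h3, h _ _ h4⟩)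
  · exact Or.inr (Or.inr (Or.inl ⟨h1, h2, h _ _ h3, h _ _ h4⟩))
  · refine Or.inr (Or.inr (Or.inr ⟨h1, fun ρ hρ => ?_, fun ρ' hρ' => ?_⟩))
    · obtain ⟨ρ', hρ', hr⟩ := h2 ρ hρ; exact ⟨ρ', hρ', h _ _ hr⟩
    · obtain ⟨ρ, hρ, hr⟩ := h3 ρ' hρ'; exact ⟨ρ, hρ, h _ _ hr⟩

lemma EqT_step {a b : PTree} (h : EqT a b) : EqTStep EqT a b := by
  obtain ⟨R, hR, hab⟩ := h
  exact eqTStep_mono (fun x y hxy => ⟨R, hR, hxy⟩) (hR _ _ hab)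

lemma eqT_trunc_zero (x y : PTree) : EqT (trunc 0 x) (trunc 0 y) :=
  ⟨fun u v => u [] = some (.leaf .circ) ∧ v [] = some (.leaf .circ),
   fun _ _ h => Or.inl ⟨.circ, h.1, h.2⟩, rfl, rfl⟩

/-- Truncation preserves `≈T` (the "only if" direction). -/
lemma eqT_trunc {x y : PTree} (h : EqT x y) (k : ℕ) : EqT (trunc k x) (trunc k y) := by
  refine ⟨fun u v => ∃ k x y, EqT x y ∧ u = trunc k x ∧ v = trunc k y, ?_,
    ⟨k, x, y, h, rfl, rfl⟩⟩
  rintro u v ⟨k, x, y, hxy, rfl, rfl⟩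
  cases k with
  | zero => exact Or.inl ⟨.circ, rfl, rfl⟩
  | succ k =>
    have hs := EqT_step hxy
    rcases hs with ⟨a, ha, hb⟩ | ⟨ha, hb, h1, h2⟩ | ⟨ha, hb, h1, h2⟩ | ⟨hor, m1, m2⟩
    · exact Or.inl ⟨a, ha, hb⟩
    · refine Or.inr (Or.inl ⟨ha, hb, ?_, ?_⟩)
      · rw [show childT (trunc (k+1) x) false = trunc k (childT x false) from
          childT_trunc_app ha k false,
          show childT (trunc (k+1) y) false = trunc k (childT y false) from
          childT_trunc_app hb k false]
        exact ⟨k, _, _, h1, rfl, rfl⟩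
      · rw [show childT (trunc (k+1) x) true = trunc k (childT x true) from
          childT_trunc_app ha k true,
          show childT (trunc (k+1) y) true = trunc k (childT y true) from
          childT_trunc_app hb k true]
        exact ⟨k, _, _, h2, rfl, rfl⟩
    · refine Or.inr (Or.inr (Or.inl ⟨ha, hb, ?_, ?_⟩))
      · rw [childT_trunc_arrow ha k false, childT_trunc_arrow hb k false]
        exact ⟨k, _, _, h1, rfl, rfl⟩
      · rw [childT_trunc_arrow ha k true, childT_trunc_arrow hb k true]
        exact ⟨k, _, _, h2, rfl, rfl⟩
    · refine Or.inr (Or.inr (Or.inr ⟨hor, ?_, ?_⟩))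
      · intro ρ hρ
        rw [compPaths_trunc] at hρ
        obtain ⟨ρ', hρ', he⟩ := m1 ρ hρ
        refine ⟨ρ', by rwa [compPaths_trunc], ?_⟩
        rw [subtreeAt_trunc hρ.1, subtreeAt_trunc hρ'.1]
        exact ⟨k+1, _, _, he, rfl, rfl⟩
      · intro ρ' hρ'
        rw [compPaths_trunc] at hρ'
        obtain ⟨ρ, hρ, he⟩ := m2 ρ' hρ'
        refine ⟨ρ, by rwa [compPaths_trunc], ?_⟩
        rw [subtreeAt_trunc hρ.1, subtreeAt_trunc hρ'.1]
        exact ⟨k+1, _, _, he, rfl, rfl⟩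

lemma eqT_trunc_down {x y : PTree} {k : ℕ}
    (h : EqT (trunc (k+1) x) (trunc (k+1) y)) : EqT (trunc k x) (trunc k y) := by
  have := eqT_trunc h k
  rwa [trunc_trunc, trunc_trunc] at this

lemma eqT_trunc_le {x y : PTree} {k m : ℕ} (hkm : k ≤ m)
    (h : EqT (trunc m x) (trunc m y)) : EqT (trunc k x) (trunc k y) := by
  induction m with
  | zero => obtain rfl := Nat.le_zero.mp hkm; exact h
  | succ m ih =>
    rcases Nat.eq_or_lt_of_le hkm with rfl | hlt
    · exact h
    · exact ih (Nat.lt_succ_iff.mp hlt) (eqT_trunc_down h)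

/-! ### Finiteness of component paths (König-style argument) -/

def UnionPref (t : PTree) : Set (List Bool) :=
  {ρ | ∃ σ, IsCompPath t σ ∧ ρ <+: σ ∧ ρ ≠ σ}

lemma unionPref_label {t : PTree} {ρ : List Bool} (h : ρ ∈ UnionPref t) :
    t ρ = some .union := by
  obtain ⟨σ, hσ, hp, hne⟩ := h
  exact hσ.1 ρ hp hne

lemma unionPref_prefix_closed {t : PTree} :
    ∀ ρ σ, σ ∈ UnionPref t → ρ <+: σ → ρ ∈ UnionPref t := by
  rintro ρ σ ⟨τ, hτ, hp, hne⟩ hρσ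
  refine ⟨τ, hτ, hρσ.trans hp, ?_⟩
  rintro rfl
  have h1 := hρσ.length_le
  have h2 := hp.length_le
  exact hne (hp.eq_of_length (le_antisymm h2 h1))

lemma unionPref_infinite {t : PTree} (h : ¬ (compPaths t).Finite) :
    (UnionPref t).Infinite := by
  intro hfin
  apply h
  have hsub : compPaths t ⊆
      insert [] (⋃ ρ ∈ UnionPref t, {ρ ++ [false], ρ ++ [true]}) := by
    intro σ hσ
    rcases List.eq_nil_or_concat σ with rfl | ⟨ρ, b, rfl⟩
    · exact Set.mem_insert _ _
    · simp only [List.concat_eq_append] at hσ ⊢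
      have hρ : ρ ∈ UnionPref t := ⟨ρ ++ [b], hσ, ⟨[b], rfl⟩, by simp⟩
      refine Set.mem_insert_of_mem _ (Set.mem_biUnion hρ ?_)
      cases b
      · exact Set.mem_insert _ _
      · exact Set.mem_insert_of_mem _ rfl
  refine Set.Finite.subset (Set.Finite.insert _ (Set.Finite.biUnion hfin ?_)) hsub
  intro ρ _
  exact (Set.finite_singleton _).insert _

lemma prefix_split {ρ σ : List Bool} (h : ρ <+: σ) :
    σ = ρ ∨ ρ ++ [false] <+: σ ∨ ρ ++ [true] <+: σ := by
  obtain ⟨τ, rfl⟩ := h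
  cases τ with
  | nil => left; simp
  | cons b τ =>
    right
    cases b
    · left; exact ⟨τ, by simp⟩
    · right; exact ⟨τ, by simp⟩

open Classical in
noncomputable def kF (S : Set (List Bool)) : ℕ → List Bool
  | 0 => []
  | n+1 => kF S n ++ [if {σ ∈ S | kF S n ++ [false] <+: σ}.Infinite then false else true]

open Classical in
noncomputable def kg (S : Set (List Bool)) (n : ℕ) : Bool :=
  if {σ ∈ S | kF S n ++ [false] <+: σ}.Infinite then false else true

lemma kF_succ (S : Set (List Bool)) (n : ℕ) : kF S (n+1) = kF S n ++ [kg S n] := rfl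

lemma kF_eq (S : Set (List Bool)) (n : ℕ) : kF S n = (List.range n).map (kg S) := by
  induction n with
  | zero => rfl
  | succ n ih => rw [kF_succ, List.range_succ, List.map_append, ← ih]; rfl

lemma kF_spec {S : Set (List Bool)}
    (hpc : ∀ ρ σ, σ ∈ S → ρ <+: σ → ρ ∈ S) (hinf : S.Infinite) (n : ℕ) :
    kF S n ∈ S ∧ {σ ∈ S | kF S n <+: σ}.Infinite := by
  induction n with
  | zero =>
    have h0 : {σ ∈ S | kF S 0 <+: σ} = S := by
      ext σ; simp [show kF S 0 = [] from rfl]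
    obtain ⟨σ, hσ⟩ := hinf.nonempty
    exact ⟨hpc [] σ hσ List.nil_prefix, by rw [h0]; exact hinf⟩
  | succ n ih =>
    obtain ⟨hm, hI⟩ := ih
    have hsplit : {σ ∈ S | kF S n ++ [false] <+: σ}.Infinite ∨
        {σ ∈ S | kF S n ++ [true] <+: σ}.Infinite := by
      by_contra hc
      rw [not_or, Set.not_infinite, Set.not_infinite] at hc
      apply hI
      refine Set.Finite.subset (((hc.1.union hc.2).insert (kF S n))) ?_
      rintro σ ⟨hσS, hσp⟩
      rcases prefix_split hσp with rfl | hp | hp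
      · exact Set.mem_insert _ _
      · exact Set.mem_insert_of_mem _ (Or.inl ⟨hσS, hp⟩)
      · exact Set.mem_insert_of_mem _ (Or.inr ⟨hσS, hp⟩)
    have hnext : {σ ∈ S | kF S (n+1) <+: σ}.Infinite := by
      rw [kF_succ]
      unfold kg
      split
      · next hP => exact hP
      · next hP => exact hsplit.resolve_left hP
    obtain ⟨σ, hσS, hσp⟩ := hnext.nonempty
    exact ⟨hpc _ σ hσS hσp, hnext⟩

lemma exists_union_branch {t : PTree} (h : ¬ (compPaths t).Finite) :
    ∃ g : ℕ → Bool, ∀ n : ℕ, t ((List.range n).map g) = some .union := by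
  refine ⟨kg (UnionPref t), fun n => ?_⟩
  rw [← kF_eq]
  exact unionPref_label (kF_spec unionPref_prefix_closed (unionPref_infinite h) n).1

lemma compPaths_finite (A : ITree) (π : List Bool) :
    (compPaths (subtreeAt A.label π)).Finite := by
  by_contra h
  obtain ⟨g, hg⟩ := exists_union_branch h
  exact A.noUnionBranch ⟨π, g, hg⟩

/-! ### Pigeonhole helpers -/

lemma infinite_nat_exists_ge {s : Set ℕ} (hs : s.Infinite) (m : ℕ) :
    ∃ k ∈ s, m ≤ k := by
  by_contra hc
  push_neg at hc
  exact hs ((Set.finite_Iio m).subset fun k hk => hc k hk)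

lemma exists_infinite_fiber_of_finite {s : Set (List Bool)} (hs : s.Finite)
    (f : ℕ → List Bool) (hf : ∀ k, f k ∈ s) :
    ∃ ρ ∈ s, {k | f k = ρ}.Infinite := by
  by_contra h
  push_neg at h
  have huniv : (Set.univ : Set ℕ) ⊆ ⋃ ρ ∈ s, {k | f k = ρ} :=
    fun k _ => Set.mem_biUnion (hf k) rfl
  exact Set.infinite_univ
    (Set.Finite.subset (hs.biUnion fun ρ hρ => h ρ hρ) huniv)

lemma pigeon_choice {s : Set (List Bool)} (hs : s.Finite) (P : ℕ → List Bool → Prop)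
    (hmono : ∀ k m ρ, k ≤ m → P m ρ → P k ρ)
    (h : ∀ k, ∃ ρ ∈ s, P k ρ) : ∃ ρ ∈ s, ∀ k, P k ρ := by
  classical
  choose f hf1 hf2 using h
  obtain ⟨ρ, hρ, hinf⟩ := exists_infinite_fiber_of_finite hs f hf1
  refine ⟨ρ, hρ, fun k => ?_⟩
  obtain ⟨m, hm, hkm⟩ := infinite_nat_exists_ge hinf k
  exact hmono k m ρ hkm (hm ▸ hf2 m)

/-! ### The theorem -/

theorem trunc_eqT_iff (A B : ITree) :
    (∀ k : ℕ, EqT (trunc k A.label) (trunc k B.label)) ↔ EqT A.label B.label := by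
  constructor
  · intro h
    refine ⟨fun u v => (∃ π, u = subtreeAt A.label π) ∧ (∃ π, v = subtreeAt B.label π) ∧
        ∀ k, EqT (trunc k u) (trunc k v), ?_, ⟨[], rfl⟩, ⟨[], rfl⟩, h⟩
    rintro u v ⟨⟨πa, rfl⟩, ⟨πb, rfl⟩, hk⟩
    have h1 := EqT_step (hk 1)
    rcases h1 with ⟨a, ha, hb⟩ | ⟨ha, hb, -, -⟩ | ⟨ha, hb, -, -⟩ | ⟨hor, -, -⟩
    · -- leaf case
      exact Or.inl ⟨a, ha, hb⟩
    · -- app case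
      have hu : subtreeAt A.label πa [] = some .app := ha
      have hv : subtreeAt B.label πb [] = some .app := hb
      refine Or.inr (Or.inl ⟨hu, hv, ?_, ?_⟩) <;>
      · refine ⟨⟨πa ++ [_], (childT_subtreeAt _ _ _)⟩, ⟨πb ++ [_], (childT_subtreeAt _ _ _)⟩, ?_⟩
        intro k
        cases k with
        | zero => exact eqT_trunc_zero _ _
        | succ k =>
          have hs := EqT_step (hk (k+2))
          rcases hs with ⟨a, ha', hb'⟩ | ⟨-, -, h1, h2⟩ | ⟨ha', hb', -, -⟩ | ⟨hor, -, -⟩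
          · rw [show trunc (k+2) (subtreeAt A.label πa) [] = subtreeAt A.label πa [] from rfl,
              hu] at ha'
            simp at ha'
          · first
            | (rw [childT_trunc_app hu (k+1) false, childT_trunc_app hv (k+1) false] at h1
               exact h1)
            | (rw [childT_trunc_app hu (k+1) true, childT_trunc_app hv (k+1) true] at h2
               exact h2)
          · rw [show trunc (k+2) (subtreeAt A.label πa) [] = subtreeAt A.label πa [] from rfl,
              hu] at ha'
            simp at ha'
          · rcases hor with ha' | hb'
            · rw [show trunc (k+2) (subtreeAt A.label πa) [] = subtreeAt A.label πa [] from rfl,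
                hu] at ha'
              simp at ha'
            · rw [show trunc (k+2) (subtreeAt B.label πb) [] = subtreeAt B.label πb [] from rfl,
                hv] at hb'
              simp at hb'
    · -- arrow case
      have hu : subtreeAt A.label πa [] = some .arrow := ha
      have hv : subtreeAt B.label πb [] = some .arrow := hb
      refine Or.inr (Or.inr (Or.inl ⟨hu, hv, ?_, ?_⟩)) <;>
      · refine ⟨⟨πa ++ [_], (childT_subtreeAt _ _ _)⟩, ⟨πb ++ [_], (childT_subtreeAt _ _ _)⟩, ?_⟩
        intro k
        cases k with
        | zero => exact eqT_trunc_zero _ _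
        | succ k =>
          have hs := EqT_step (hk (k+2))
          rcases hs with ⟨a, ha', hb'⟩ | ⟨ha', hb', -, -⟩ | ⟨-, -, h1, h2⟩ | ⟨hor, -, -⟩
          · rw [show trunc (k+2) (subtreeAt A.label πa) [] = subtreeAt A.label πa [] from rfl,
              hu] at ha'
            simp at ha'
          · rw [show trunc (k+2) (subtreeAt A.label πa) [] = subtreeAt A.label πa [] from rfl,
              hu] at ha'
            simp at ha'
          · first
            | (rw [childT_trunc_arrow hu (k+1) false, childT_trunc_arrow hv (k+1) false] at h1
               exact h1)
            | (rw [childT_trunc_arrow hu (k+1) true, childT_trunc_arrow hv (k+1) true] at h2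
               exact h2)
          · rcases hor with ha' | hb'
            · rw [show trunc (k+2) (subtreeAt A.label πa) [] = subtreeAt A.label πa [] from rfl,
                hu] at ha'
              simp at ha'
            · rw [show trunc (k+2) (subtreeAt B.label πb) [] = subtreeAt B.label πb [] from rfl,
                hv] at hb'
              simp at hb'
    · -- union case
      have hor' : subtreeAt A.label πa [] = some .union ∨
          subtreeAt B.label πb [] = some .union := hor
      have key : ∀ k : ℕ,
          (∀ ρ ∈ compPaths (subtreeAt A.label πa),
            ∃ ρ' ∈ compPaths (subtreeAt B.label πb),
              EqT (trunc (k+1) (subtreeAt (subtreeAt A.label πa) ρ))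
                  (trunc (k+1) (subtreeAt (subtreeAt B.label πb) ρ'))) ∧
          (∀ ρ' ∈ compPaths (subtreeAt B.label πb),
            ∃ ρ ∈ compPaths (subtreeAt A.label πa),
              EqT (trunc (k+1) (subtreeAt (subtreeAt A.label πa) ρ))
                  (trunc (k+1) (subtreeAt (subtreeAt B.label πb) ρ'))) := by
        intro k
        have hs := EqT_step (hk (k+1))
        rcases hs with ⟨a, ha', hb'⟩ | ⟨ha', hb', -, -⟩ | ⟨ha', hb', -, -⟩ | ⟨-, m1, m2⟩
        · rcases hor' with hA | hB
          · have : subtreeAt A.label πa [] = some (.leaf a) := ha'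
            rw [hA] at this; simp at this
          · have : subtreeAt B.label πb [] = some (.leaf a) := hb'
            rw [hB] at this; simp at this
        · rcases hor' with hA | hB
          · have : subtreeAt A.label πa [] = some .app := ha'
            rw [hA] at this; simp at this
          · have : subtreeAt B.label πb [] = some .app := hb'
            rw [hB] at this; simp at this
        · rcases hor' with hA | hB
          · have : subtreeAt A.label πa [] = some .arrow := ha'
            rw [hA] at this; simp at this
          · have : subtreeAt B.label πb [] = some .arrow := hb'
            rw [hB] at this; simp at this
        · constructor
          · intro ρ hρ
            obtain ⟨ρ', hρ', he⟩ := m1 ρ (by rwa [compPaths_trunc])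
            rw [compPaths_trunc] at hρ'
            refine ⟨ρ', hρ', ?_⟩
            rwa [subtreeAt_trunc hρ.1, subtreeAt_trunc hρ'.1] at he
          · intro ρ' hρ'
            obtain ⟨ρ, hρ, he⟩ := m2 ρ' (by rwa [compPaths_trunc])
            rw [compPaths_trunc] at hρ
            refine ⟨ρ, hρ, ?_⟩
            rwa [subtreeAt_trunc hρ.1, subtreeAt_trunc hρ'.1] at he
      refine Or.inr (Or.inr (Or.inr ⟨hor', ?_, ?_⟩))
      · intro ρ hρ
        obtain ⟨ρ', hρ', hall⟩ := pigeon_choice (compPaths_finite B πb)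
          (fun k ρ' => EqT (trunc (k+1) (subtreeAt (subtreeAt A.label πa) ρ))
              (trunc (k+1) (subtreeAt (subtreeAt B.label πb) ρ')))
          (fun k m ρ' hkm hP => eqT_trunc_le (Nat.succ_le_succ hkm) hP)
          (fun k => (key k).1 ρ hρ)
        refine ⟨ρ', hρ', ⟨πa ++ ρ, subtreeAt_subtreeAt _ _ _⟩,
          ⟨πb ++ ρ', subtreeAt_subtreeAt _ _ _⟩, fun k => ?_⟩
        cases k with
        | zero => exact eqT_trunc_zero _ _
        | succ k => exact hall k
      · intro ρ' hρ'
        obtain ⟨ρ, hρ, hall⟩ := pigeon_choice (compPaths_finite A πa)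
          (fun k ρ => EqT (trunc (k+1) (subtreeAt (subtreeAt A.label πa) ρ))
              (trunc (k+1) (subtreeAt (subtreeAt B.label πb) ρ')))
          (fun k m ρ hkm hP => eqT_trunc_le (Nat.succ_le_succ hkm) hP)
          (fun k => (key k).2 ρ' hρ')
        refine ⟨ρ, hρ, ⟨πa ++ ρ, subtreeAt_subtreeAt _ _ _⟩,
          ⟨πb ++ ρ', subtreeAt_subtreeAt _ _ _⟩, fun k => ?_⟩
        cases k with
        | zero => exact eqT_trunc_zero _ _
        | succ k => exact hall k
  · intro h k
    exact eqT_trunc h k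

end TruncEqT

end CAPPaper
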